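/- In a deterministic MDP with absorbing goal g, the infimum over stationary deterministic policies of the hitting time equals the shortest action-sequence length: for every state s, d*(s) equals the least n ∈ ℕ∞ such that there exists a finite sequence of actions a₀, …, a_{n−1} whose induced state sequence s₀ = s, s_{k+1} = T(s_k, a_k) satisfies s_n = g. -/

import Mathlib

lemma enat_sInf_mem {s : Set ℕ∞} (h : s.Nonempty) : sInf s ∈ s := by
  have wf : WellFoundedLT ℕ∞ := inferInstance
  have hmin := wf.wf.min_mem s h
  have : sInf s = wf.wf.min s h := by
    apply le_antisymm (sInf_le hmin)
    exact le_sInf fun b hb => not_lt.mp (wf.wf.not_lt_min s hb)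
  rw [this]; exact hmin

section aux
variable {S A : Type*} [Nonempty A] (T : S → A → S) (π : S → A)

/-- the trajectory of actions -/
def traj : ℕ → S → List A
  | 0, _ => []
  | (m+1), s => π s :: traj m (T s (π s))

lemma traj_length (m : ℕ) (s : S) : (traj T π m s).length = m := by
  induction m generalizing s with
  | zero => rfl
  | succ k ih => simp [traj, ih]

lemma traj_foldl (m : ℕ) (s : S) :
    (traj T π m s).foldl T s = (fun s => T s (π s))^[m] s := by
  induction m generalizing s with
  | zero => rfl
  | succ k ih =>
    rw [Function.iterate_succ_apply]
    simpa [traj] using ih (T s (π s))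

end aux

/-- The step map induced by policy `π` in a deterministic MDP with transition `T`. -/
def stepMap {S A : Type*} (T : S → A → S) (π : S → A) : S → S := fun s => T s (π s)

/-- The dynamical distance `d^π(s)`: the least `n : ℕ` with `(stepMap T π)^[n] s = g`,
and `⊤` (infinity) if no such `n` exists. -/
noncomputable def dynDist {S A : Type*} (T : S → A → S) (g : S) (π : S → A) (s : S) : ℕ∞ :=
  sInf {n : ℕ∞ | ∃ m : ℕ, n = (m : ℕ∞) ∧ (stepMap T π)^[m] s = g}

/-- `π` reaches the goal everywhere: the dynamical distance is finite from every state. -/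
def ReachesEverywhere {S A : Type*} (T : S → A → S) (g : S) (π : S → A) : Prop :=
  ∀ s, dynDist T g π s < ⊤

/-- The loss of `π'` relative to `π` from start state `s`:
`L_π(π', s) = ∑_{i=0}^{d^{π'}(s)-1} γ^i * d^π((stepMap T π')^[i] s)`. -/
noncomputable def lossOf {S A : Type*} (T : S → A → S) (g : S) (γ : ℝ)
    (π π' : S → A) (s : S) : ℝ :=
  ∑ i ∈ Finset.range (dynDist T g π' s).toNat,
    γ ^ i * ((dynDist T g π ((stepMap T π')^[i] s)).toNat : ℝ)

/-- `π'` is optimal with respect to the reward `-d^π`. -/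
def OptimalWrt {S A : Type*} (T : S → A → S) (g : S) (γ : ℝ) (π π' : S → A) : Prop :=
  ReachesEverywhere T g π' ∧
    ∀ π'' : S → A, ReachesEverywhere T g π'' → ∀ s, lossOf T g γ π π' s ≤ lossOf T g γ π π'' s

/-- The optimal dynamical distance: the infimum of `d^π(s)` over all policies. -/
noncomputable def optDist {S A : Type*} (T : S → A → S) (g : S) (s : S) : ℕ∞ :=
  ⨅ π : S → A, dynDist T g π s

section main
variable {S A : Type*} [Nonempty A] (T : S → A → S) (g : S)

/-- graph distance -/
noncomputable def reachDist (s : S) : ℕ∞ :=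
  sInf {n : ℕ∞ | ∃ as : List A, (as.length : ℕ∞) = n ∧ as.foldl T s = g}

lemma reachDist_mem {s : S} (h : reachDist T g s ≠ ⊤) :
    ∃ as : List A, (as.length : ℕ∞) = reachDist T g s ∧ as.foldl T s = g := by
  have hne : {n : ℕ∞ | ∃ as : List A, (as.length : ℕ∞) = n ∧ as.foldl T s = g}.Nonempty := by
    by_contra hemp
    rw [Set.not_nonempty_iff_eq_empty] at hemp
    exact h (by simp [reachDist, hemp])
  exact enat_sInf_mem hne

lemma reachDist_le {s : S} (as : List A) (h : as.foldl T s = g) :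
    reachDist T g s ≤ (as.length : ℕ∞) :=
  sInf_le ⟨as, rfl, h⟩

lemma reachDist_zero {s : S} (h : reachDist T g s = 0) : s = g := by
  obtain ⟨as, hl, hf⟩ := reachDist_mem T g (s := s) (by simp [h])
  rw [h, Nat.cast_eq_zero, List.length_eq_zero_iff] at hl
  subst hl; exact hf

open Classical in
/-- optimal policy by choice -/
noncomputable def optPol : S → A := fun s =>
  if h : ∃ a : A, reachDist T g (T s a) + 1 ≤ reachDist T g s then h.choose
  else Classical.arbitrary A

lemma optPol_step {s : S} (h0 : reachDist T g s ≠ 0) (ht : reachDist T g s ≠ ⊤) :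
    reachDist T g (T s (optPol T g s)) + 1 ≤ reachDist T g s := by
  have hex : ∃ a : A, reachDist T g (T s a) + 1 ≤ reachDist T g s := by
    obtain ⟨as, hl, hf⟩ := reachDist_mem T g ht
    match as with
    | [] => exact absurd hl.symm (by simpa using h0)
    | a :: rest =>
      refine ⟨a, ?_⟩
      have := reachDist_le T g rest (s := T s a) (by simpa using hf)
      calc reachDist T g (T s a) + 1 ≤ (rest.length : ℕ∞) + 1 := by
            exact add_le_add_left this 1
        _ = reachDist T g s := by
            rw [← hl]; push_cast [List.length_cons]; ring
  rw [optPol, dif_pos hex]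
  exact hex.choose_spec

lemma optPol_reaches (hg : ∀ a : A, T g a = g) :
    ∀ (k : ℕ) (s : S), reachDist T g s ≤ k → (stepMap T (optPol T g))^[k] s = g := by
  intro k
  induction k with
  | zero =>
    intro s h
    exact reachDist_zero T g (le_antisymm (by exact_mod_cast h) zero_le)
  | succ k ih =>
    intro s h
    by_cases hs : s = g
    · have hfix : stepMap T (optPol T g) s = s := by rw [hs]; exact hg _
      rw [Function.iterate_fixed hfix, hs]
    · have h0 : reachDist T g s ≠ 0 := fun hz => hs (reachDist_zero T g hz)
      have ht : reachDist T g s ≠ ⊤ := by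
        intro hT; rw [hT] at h
        exact_mod_cast (ENat.coe_ne_top (k+1)) (top_le_iff.mp h)
      have hst := optPol_step T g h0 ht
      have hle : reachDist T g (T s (optPol T g s)) ≤ k := by
        have : reachDist T g (T s (optPol T g s)) + 1 ≤ (k : ℕ∞) + 1 := le_trans hst (by
          calc reachDist T g s ≤ ((k+1 : ℕ) : ℕ∞) := h
            _ = (k : ℕ∞) + 1 := by push_cast; ring)
        exact (ENat.add_le_add_iff_right (by simp)).mp this
      rw [Function.iterate_succ_apply]
      exact ih _ hle

end main

theorem stmt11 {S A : Type*} [Nonempty S] [Nonempty A]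
    (T : S → A → S) (g : S) (hg : ∀ a : A, T g a = g) (s : S) :
    optDist T g s =
      sInf {n : ℕ∞ | ∃ as : List A, (as.length : ℕ∞) = n ∧ as.foldl T s = g} := by
  have hrd : sInf {n : ℕ∞ | ∃ as : List A, (as.length : ℕ∞) = n ∧ as.foldl T s = g}
      = reachDist T g s := rfl
  rw [hrd]
  apply le_antisymm
  · -- optDist ≤ reachDist, via optPol
    by_cases ht : reachDist T g s = ⊤
    · rw [ht]; exact le_top
    · obtain ⟨k, hk⟩ := WithTop.ne_top_iff_exists.mp ht
      have hiter : (stepMap T (optPol T g))^[k] s = g :=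
        optPol_reaches T g hg k s (le_of_eq hk.symm)
      calc optDist T g s ≤ dynDist T g (optPol T g) s := iInf_le _ _
        _ ≤ (k : ℕ∞) := sInf_le ⟨k, rfl, hiter⟩
        _ = reachDist T g s := hk
  · -- reachDist ≤ dynDist π for all π
    refine le_iInf fun π => ?_
    by_cases ht : dynDist T g π s = ⊤
    · rw [ht]; exact le_top
    · have hne : {n : ℕ∞ | ∃ m : ℕ, n = (m : ℕ∞) ∧ (stepMap T π)^[m] s = g}.Nonempty := by
        by_contra hemp
        rw [Set.not_nonempty_iff_eq_empty] at hemp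
        exact ht (by simp [dynDist, hemp])
      obtain ⟨m, hm, hiter⟩ := enat_sInf_mem hne
      rw [show dynDist T g π s = (m : ℕ∞) from hm]
      have := reachDist_le T g (traj T π m s) (s := s) (by
        rw [traj_foldl]; exact hiter)
      simpa [traj_length] using this
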